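/- arXiv:1312.3421 — 2 statements merged into one kernel-verified Lean document; each statement's English description precedes it below -/
import Mathlib

section
/- Let G be a group with abelianization isomorphic to ℤ², whose commutator subgroup is simple, and which is not virtually abelian. Then every finite-index subgroup N of G has abelianization isomorphic to ℤ² (in particular, N/[N,N] is free abelian of rank 2). -/
open scoped commutatorElement

/-- A finite-index subgroup of `Multiplicative (ℤ × ℤ)` is isomorphic to
`Multiplicative (ℤ × ℤ)`. -/
lemma aux_finiteIndex_subgroup_zz (A : Subgroup (Multiplicative (ℤ × ℤ)))
    (hA : A.FiniteIndex) : Nonempty (↥A ≃* Multiplicative (ℤ × ℤ)) := by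
  have hn0 : A.index ≠ 0 := hA.index_ne_zero
  -- view `A` as a submodule of `ℤ × ℤ`
  let S : Submodule ℤ (ℤ × ℤ) :=
    { carrier := {x | Multiplicative.ofAdd x ∈ A}
      add_mem' := fun {a b} ha hb => by
        show Multiplicative.ofAdd (a + b) ∈ A
        rw [ofAdd_add]
        exact mul_mem ha hb
      zero_mem' := one_mem A
      smul_mem' := fun c x hx => by
        have : Multiplicative.ofAdd (c • x) = (Multiplicative.ofAdd x) ^ c :=
          ofAdd_zsmul c x
        show Multiplicative.ofAdd (c • x) ∈ A
        rw [this]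
        exact zpow_mem hx c }
  have hsmul : ∀ x : ℤ × ℤ, (A.index : ℤ) • x ∈ S := by
    intro x
    have h := A.pow_index_mem (Multiplicative.ofAdd x)
    show Multiplicative.ofAdd ((A.index : ℤ) • x) ∈ A
    rw [ofAdd_zsmul]
    simpa using h
  let ℓ : (ℤ × ℤ) →ₗ[ℤ] S :=
    { toFun := fun x => ⟨(A.index : ℤ) • x, hsmul x⟩
      map_add' := fun x y => by ext <;> simp [smul_add]
      map_smul' := fun c x => by ext <;> simp <;> ring }
  have hinj : Function.Injective ℓ := by
    intro x y h
    have h' : (A.index : ℤ) • x = (A.index : ℤ) • y := congrArg Subtype.val h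
    exact smul_right_injective (ℤ × ℤ) (by exact_mod_cast hn0) h'
  have h2 : Module.finrank ℤ (ℤ × ℤ) = 2 := by
    rw [Module.finrank_prod, Module.finrank_self]
  have hle : Module.finrank ℤ ↥S ≤ 2 := h2 ▸ S.finrank_le
  have hge : 2 ≤ Module.finrank ℤ ↥S :=
    h2 ▸ LinearMap.finrank_le_finrank_of_injective hinj
  have hrank : Module.finrank ℤ ↥S = 2 := le_antisymm hle hge
  let b := (Module.finBasis ℤ ↥S).reindex (finCongr hrank)
  let e2 : ↥S ≃ₗ[ℤ] ℤ × ℤ := b.equivFun.trans (LinearEquiv.finTwoArrow ℤ ℤ)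
  let e3 : ↥A ≃* Multiplicative ↥S :=
    { toFun := fun a => Multiplicative.ofAdd (⟨Multiplicative.toAdd (a : Multiplicative (ℤ × ℤ)), a.2⟩ : ↥S)
      invFun := fun s => ⟨Multiplicative.ofAdd ((Multiplicative.toAdd s : ↥S) : ℤ × ℤ),
        (Multiplicative.toAdd s : ↥S).2⟩
      left_inv := fun a => rfl
      right_inv := fun s => rfl
      map_mul' := fun a b => rfl }
  exact ⟨e3.trans (AddEquiv.toMultiplicative e2.toAddEquiv)⟩

/-- If `G` has abelianization `ℤ²`, simple commutator subgroup, and is not virtually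
abelian, then every finite-index subgroup of `G` has abelianization `ℤ²`. -/
theorem abelianization_of_finiteIndex_subgroup {G : Type*} [Group G]
    (hab : Nonempty (Abelianization G ≃* Multiplicative (ℤ × ℤ)))
    (hsimple : IsSimpleGroup (commutator G))
    (hnva : ¬ ∃ H : Subgroup G, H.FiniteIndex ∧ IsMulCommutative H) :
    ∀ N : Subgroup G, N.FiniteIndex →
      Nonempty (Abelianization N ≃* Multiplicative (ℤ × ℤ)) := by
  obtain ⟨φ⟩ := hab
  intro N hN
  -- A normal subgroup of finite index that is not commutative contains the commutator.
  have key : ∀ K : Subgroup G, K.Normal → K.FiniteIndex → commutator G ≤ K := by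
    intro K hKn hKf
    haveI := hKn
    haveI : (K ⊓ commutator G).Normal := Subgroup.normal_inf_normal K (commutator G)
    have hnorm : ((K ⊓ commutator G).subgroupOf (commutator G)).Normal :=
      Subgroup.Normal.subgroupOf this (commutator G)
    rcases hsimple.eq_bot_or_eq_top_of_normal _ hnorm with hbot | htop
    · -- then K is commutative, contradiction
      exfalso
      have hdisj : Disjoint (K ⊓ commutator G) (commutator G) :=
        Subgroup.subgroupOf_eq_bot.mp hbot
      have hKbot : K ⊓ commutator G = ⊥ :=
        le_bot_iff.mp (le_trans (le_inf le_rfl inf_le_right) hdisj.le_bot)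
      have hcomm : IsMulCommutative K := by
        constructor
        constructor
        intro a b
        have h1 : ⁅(a : G), (b : G)⁆ ∈ K ⊓ commutator G := by
          constructor
          · rw [commutatorElement_def]
            exact K.mul_mem (K.mul_mem (K.mul_mem a.2 b.2) (K.inv_mem a.2)) (K.inv_mem b.2)
          · exact Subgroup.commutator_mem_commutator (Subgroup.mem_top _) (Subgroup.mem_top _)
        rw [hKbot] at h1
        have h2 : ⁅(a : G), (b : G)⁆ = 1 := h1
        have h3 : (a : G) * b = b * a := commutatorElement_eq_one_iff_mul_comm.mp h2
        exact Subtype.ext h3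
      exact hnva ⟨K, hKf, hcomm⟩
    · have := Subgroup.subgroupOf_eq_top.mp htop
      exact le_trans this inf_le_left
  -- the commutator subgroup lies in N
  haveI : N.normalCore.FiniteIndex := Subgroup.finiteIndex_normalCore N
  have hle : commutator G ≤ N :=
    le_trans (key N.normalCore (Subgroup.normalCore_normal N) inferInstance)
      (Subgroup.normalCore_le N)
  -- N is normal
  haveI hNnormal : N.Normal := by
    constructor
    intro n hn g
    have h1 : ⁅g, n⁆ ∈ commutator G :=
      Subgroup.commutator_mem_commutator (Subgroup.mem_top _) (Subgroup.mem_top _)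
    have h2 : ⁅g, n⁆ ∈ N := hle h1
    have h3 : g * n * g⁻¹ = ⁅g, n⁆ * n := by group
    rw [h3]
    exact N.mul_mem h2 hn
  -- ⁅N, N⁆ = commutator G
  haveI : (⁅N, N⁆ : Subgroup G).Normal := Subgroup.commutator_normal N N
  have hNNle : (⁅N, N⁆ : Subgroup G) ≤ commutator G :=
    Subgroup.commutator_mono le_top le_top
  have hNN : (⁅N, N⁆ : Subgroup G) = commutator G := by
    have hnorm : ((⁅N, N⁆ : Subgroup G).subgroupOf (commutator G)).Normal :=
      Subgroup.Normal.subgroupOf inferInstance (commutator G)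
    rcases hsimple.eq_bot_or_eq_top_of_normal _ hnorm with hbot | htop
    · exfalso
      have hdisj : Disjoint (⁅N, N⁆ : Subgroup G) (commutator G) :=
        Subgroup.subgroupOf_eq_bot.mp hbot
      have hBot : (⁅N, N⁆ : Subgroup G) = ⊥ :=
        le_bot_iff.mp (le_trans (le_inf le_rfl hNNle) hdisj.le_bot)
      have hcomm : IsMulCommutative N := by
        constructor
        constructor
        intro a b
        have h1 : ⁅(a : G), (b : G)⁆ ∈ (⁅N, N⁆ : Subgroup G) :=
          Subgroup.commutator_mem_commutator a.2 b.2
        rw [hBot] at h1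
        have h2 : ⁅(a : G), (b : G)⁆ = 1 := h1
        exact Subtype.ext (commutatorElement_eq_one_iff_mul_comm.mp h2)
      exact hnva ⟨N, hN, hcomm⟩
    · exact le_antisymm hNNle (Subgroup.subgroupOf_eq_top.mp htop)
  -- the projection to ℤ²
  let π : G →* Multiplicative (ℤ × ℤ) := φ.toMonoidHom.comp Abelianization.of
  have hπsurj : Function.Surjective π := by
    intro y
    obtain ⟨z, hz⟩ := φ.surjective y
    obtain ⟨g, hg⟩ := QuotientGroup.mk_surjective (s := commutator G) z
    refine ⟨g, ?_⟩
    show φ (Abelianization.of g) = y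
    rw [show Abelianization.of g = z from hg]
    exact hz
  have hkerπ : π.ker = commutator G := by
    ext x
    constructor
    · intro hx
      have h1 : φ (Abelianization.of x) = 1 := hx
      have h2 : Abelianization.of x = 1 := φ.injective (by rw [map_one]; exact h1)
      exact (QuotientGroup.eq_one_iff x).mp h2
    · intro hx
      have h2 : Abelianization.of x = 1 := (QuotientGroup.eq_one_iff x).mpr hx
      show φ (Abelianization.of x) = 1
      rw [h2, map_one]
  -- restriction of π to N
  let f : ↥N →* Multiplicative (ℤ × ℤ) := π.comp N.subtype
  have hmapcomm : Subgroup.map N.subtype (commutator ↥N) = (⁅N, N⁆ : Subgroup G) := by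
    rw [commutator_def, Subgroup.map_commutator]
    congr 1 <;>
      rw [← MonoidHom.range_eq_map, Subgroup.range_subtype]
  have hkerf : f.ker = commutator ↥N := by
    have h1 : f.ker = Subgroup.comap N.subtype π.ker := rfl
    rw [h1, hkerπ, ← hNN, ← hmapcomm,
      Subgroup.comap_map_eq_self_of_injective (Subgroup.subtype_injective N)]
  -- range of f has finite index
  have hrange : f.range = Subgroup.map π N := by
    rw [MonoidHom.range_comp, Subgroup.range_subtype]
  have hidx : f.range.index = N.index := by
    rw [hrange, Subgroup.index_map, hkerπ, sup_of_le_left hle,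
      show π.range = ⊤ from MonoidHom.range_eq_top.mpr hπsurj,
      Subgroup.index_top, mul_one]
  have hfin : f.range.FiniteIndex := ⟨by rw [hidx]; exact hN.index_ne_zero⟩
  obtain ⟨ψ⟩ := aux_finiteIndex_subgroup_zz f.range hfin
  -- assemble
  have e0 : Abelianization ↥N ≃* (↥N ⧸ f.ker) :=
    QuotientGroup.quotientMulEquivOfEq hkerf.symm
  exact ⟨(e0.trans (QuotientGroup.quotientKerEquivRange f)).trans ψ⟩
end

section
/- The group defined by the infinite presentation ⟨x₀, x₁, x₂, ... | xₙxᵢ = xᵢxₙ₊₁ for all 0 ≤ i < n⟩ is isomorphic to the group with finite presentation ⟨x₀, x₁ | [x₀x₁⁻¹, x₀⁻¹x₁x₀] = 1, [x₀x₁⁻¹, x₀⁻²x₁x₀²] = 1⟩, via the identification xₙ = x₀^{1-n} x₁ x₀^{n-1} for n ≥ 2. -/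
namespace ThompsonAux
/-- The free generator `x₀`. -/
def a : FreeGroup (Fin 2) := FreeGroup.of 0
/-- The free generator `x₁`. -/
def b : FreeGroup (Fin 2) := FreeGroup.of 1
end ThompsonAux

open scoped commutatorElement in
/-- Relators `[x₀x₁⁻¹, x₀⁻¹x₁x₀]` and `[x₀x₁⁻¹, x₀⁻²x₁x₀²]` of the standard finite
presentation of Thompson's group `F`. -/
def thompsonRels : Set (FreeGroup (Fin 2)) :=
  { ⁅ThompsonAux.a * ThompsonAux.b⁻¹, ThompsonAux.a⁻¹ * ThompsonAux.b * ThompsonAux.a⁆,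
    ⁅ThompsonAux.a * ThompsonAux.b⁻¹, ThompsonAux.a⁻¹ ^ 2 * ThompsonAux.b * ThompsonAux.a ^ 2⁆ }

/-- Thompson's group `F`, via its standard finite presentation. -/
def ThompsonF := PresentedGroup thompsonRels

instance : Group ThompsonF := by unfold ThompsonF; infer_instance

/-- The generators `x₀, x₁` of Thompson's group `F`. -/
def ThompsonF.x (i : Fin 2) : ThompsonF := PresentedGroup.of i

/-- Relators `xₙxᵢ(xᵢxₙ₊₁)⁻¹` for `0 ≤ i < n` of the infinite presentation of
Thompson's group `F`. -/
def thompsonInfRels : Set (FreeGroup ℕ) :=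
  { r | ∃ n i : ℕ, i < n ∧
      r = FreeGroup.of n * FreeGroup.of i * (FreeGroup.of i * FreeGroup.of (n + 1))⁻¹ }

/-- Thompson's group `F`, via its infinite presentation
`⟨x₀, x₁, … | xₙxᵢ = xᵢxₙ₊₁ for 0 ≤ i < n⟩`. -/
def ThompsonInf := PresentedGroup thompsonInfRels

instance : Group ThompsonInf := by unfold ThompsonInf; infer_instance

/-- The generators `xᵢ` of the infinitely presented Thompson's group. -/
def ThompsonInf.x (i : ℕ) : ThompsonInf := PresentedGroup.of i

/-! ### Auxiliary development -/

namespace ThompsonProof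
open ThompsonAux

lemma presented_rel {α : Type*} {rels : Set (FreeGroup α)} {r : FreeGroup α} (h : r ∈ rels) :
    PresentedGroup.mk rels r = 1 :=
  (QuotientGroup.eq_one_iff r).mpr (Subgroup.subset_normalClosure h)

/-! #### Generic lemmas about the elements `yₙ = A^{1-n} B A^{n-1}` of a group -/

section Generic
variable {G : Type*} [Group G] (A B : G)

/-- `y A B n = A^{1-n} * B * A^{n-1}`. -/
def y (n : ℕ) : G := A ^ (1 - (n : ℤ)) * B * A ^ ((n : ℤ) - 1)

variable {A B}

lemma y1 : y A B 1 = B := by unfold y; norm_num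

lemma yA (n : ℕ) : y A B (n + 1) = A⁻¹ * y A B n * A := by unfold y; push_cast; group

lemma step1 {n : ℕ} (h : Commute (A * B⁻¹) (y A B n)) :
    y A B (n + 1) = B⁻¹ * y A B n * B := by
  have h' : A * B⁻¹ * y A B n = y A B n * (A * B⁻¹) := h.eq
  have := congrArg (fun t => A⁻¹ * t * B) h'
  simp only [mul_assoc] at this ⊢
  rw [yA]
  simp only [mul_assoc, inv_mul_cancel_left, mul_inv_cancel, mul_one] at this ⊢
  rw [this]; group

lemma key (c2 : Commute (A * B⁻¹) (y A B 2)) (c3 : Commute (A * B⁻¹) (y A B 3)) :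
    ∀ m : ℕ, Commute (A * B⁻¹) (y A B (m + 2)) := by
  have Q : ∀ m : ℕ, Commute (A * B⁻¹) (y A B (m + 2)) ∧ Commute (A * B⁻¹) (y A B (m + 3)) := by
    intro m
    induction m with
    | zero => exact ⟨c2, c3⟩
    | succ k ih =>
      refine ⟨ih.2, ?_⟩
      have h1 : y A B (k + 3) = B⁻¹ * y A B (k + 2) * B := step1 ih.1
      have hstep : y A B (k + 4) = (y A B 2)⁻¹ * y A B (k + 3) * y A B 2 := by
        have h2 : y A B (k + 4) = A⁻¹ * y A B (k + 3) * A := yA _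
        have h3 : y A B (k + 3) = A⁻¹ * y A B (k + 2) * A := yA _
        have h4 : y A B 2 = A⁻¹ * y A B 1 * A := yA _
        conv_rhs => rw [h3, h4, y1]
        rw [h2, h1]
        group
      have h5 : (k + 1) + 3 = k + 4 := by ring
      rw [h5, hstep]
      exact ((c2.inv_right.mul_right ih.2).mul_right c2)
  exact fun m => (Q m).1

lemma yrel (c2 : Commute (A * B⁻¹) (y A B 2)) (c3 : Commute (A * B⁻¹) (y A B 3)) :
    ∀ i n : ℕ, 1 ≤ i → i < n → y A B n * y A B i = y A B i * y A B (n + 1) := by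
  intro i n hi
  induction i, hi using Nat.le_induction generalizing n with
  | base =>
    intro hn
    obtain ⟨m, rfl⟩ : ∃ m, n = m + 2 := ⟨n - 2, by omega⟩
    rw [y1, step1 (key c2 c3 m)]
    group
  | succ i hi ih =>
    intro hn
    obtain ⟨n', rfl⟩ : ∃ m, n = m + 1 := ⟨n - 1, by omega⟩
    have ih' : y A B n' * y A B i = y A B i * (A⁻¹ * y A B n' * A) := by
      rw [← yA]; exact ih n' (by omega)
    have := congrArg (fun t => A⁻¹ * t * A) ih'
    rw [yA n', yA i, yA (n' + 1), yA n']
    simpa [mul_assoc] using this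
end Generic

/-! #### The finitely presented side -/

abbrev A : ThompsonF := ThompsonF.x 0
abbrev B : ThompsonF := ThompsonF.x 1

lemma mk_a : (PresentedGroup.mk thompsonRels a : ThompsonF) = A := rfl
lemma mk_b : (PresentedGroup.mk thompsonRels b : ThompsonF) = B := rfl

open scoped commutatorElement in
lemma rel1 : ⁅A * B⁻¹, A⁻¹ * B * A⁆ = 1 := by
  have h := presented_rel (rels := thompsonRels)
    (Set.mem_insert ⁅a * b⁻¹, a⁻¹ * b * a⁆ _)
  simp [map_commutatorElement, mk_a, mk_b] at h
  exact h

open scoped commutatorElement in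
lemma rel2 : ⁅A * B⁻¹, A⁻¹ ^ 2 * B * A ^ 2⁆ = 1 := by
  have h := presented_rel (rels := thompsonRels) (Set.mem_insert_of_mem _ rfl)
  simp [map_commutatorElement, mk_a, mk_b] at h
  exact h

lemma c2 : Commute (A * B⁻¹) (y A B 2) := by
  have hy : y A B 2 = A⁻¹ * B * A := by unfold y; norm_num
  rw [hy]
  exact commutatorElement_eq_one_iff_commute.mp rel1

lemma c3 : Commute (A * B⁻¹) (y A B 3) := by
  have hy : y A B 3 = A⁻¹ ^ 2 * B * A ^ 2 := by unfold y; push_cast; group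
  rw [hy]
  exact commutatorElement_eq_one_iff_commute.mp rel2

/-- The images of the generators of the infinite presentation. -/
def X : ℕ → ThompsonF
  | 0 => A
  | (k + 1) => y A B (k + 1)

lemma Xrel {i n : ℕ} (h : i < n) : X n * X i = X i * X (n + 1) := by
  obtain ⟨k, rfl⟩ : ∃ k, n = k + 1 := ⟨n - 1, by omega⟩
  match i with
  | 0 =>
    show y A B (k + 1) * A = A * y A B (k + 2)
    rw [yA (k + 1)]; group
  | (j + 1) =>
    exact yrel c2 c3 (j + 1) (k + 1) (by omega) h

lemma hrelsF : ∀ r ∈ thompsonInfRels, FreeGroup.lift X r = 1 := by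
  rintro r ⟨n, i, hin, rfl⟩
  simp only [map_mul, map_inv, FreeGroup.lift_apply_of]
  rw [mul_inv_eq_one, Xrel hin]

/-- The homomorphism from the infinite presentation to `ThompsonF`. -/
def fhom : ThompsonInf →* ThompsonF := PresentedGroup.toGroup hrelsF

lemma fhom_of (n : ℕ) : fhom (ThompsonInf.x n) = X n := PresentedGroup.toGroup.of hrelsF

/-! #### The infinitely presented side -/

abbrev z (n : ℕ) : ThompsonInf := ThompsonInf.x n

lemma zrel {i n : ℕ} (h : i < n) : z n * z i = z i * z (n + 1) := by
  have hmem : FreeGroup.of n * FreeGroup.of i * (FreeGroup.of i * FreeGroup.of (n + 1))⁻¹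
      ∈ thompsonInfRels := ⟨n, i, h, rfl⟩
  have h1 := presented_rel hmem
  simp only [map_mul, map_inv, mul_inv_eq_one] at h1
  exact h1

lemma zconj {n : ℕ} (h : 1 ≤ n) : (z 0)⁻¹ * z n * z 0 = z (n + 1) := by
  rw [mul_assoc, zrel h]; group

lemma zconj' {n : ℕ} (h : 1 ≤ n) : z 0 * z (n + 1) * (z 0)⁻¹ = z n := by
  rw [← zconj h]; group

lemma zconjB {n : ℕ} (h : 2 ≤ n) : (z 1)⁻¹ * z n * z 1 = z (n + 1) := by
  rw [mul_assoc, zrel h]; group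

lemma comm2 : Commute (z 0 * (z 1)⁻¹) (z 2) := by
  have h : (z 0 * (z 1)⁻¹) * z 2 * (z 0 * (z 1)⁻¹)⁻¹ = z 2 := by
    have e : (z 0 * (z 1)⁻¹) * z 2 * (z 0 * (z 1)⁻¹)⁻¹
        = z 0 * ((z 1)⁻¹ * z 2 * z 1) * (z 0)⁻¹ := by group
    rw [e, zconjB le_rfl, zconj' (by norm_num)]
  have := congrArg (fun t => t * (z 0 * (z 1)⁻¹)) h
  simpa [mul_assoc, Commute, SemiconjBy] using this

lemma comm3 : Commute (z 0 * (z 1)⁻¹) (z 3) := by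
  have h : (z 0 * (z 1)⁻¹) * z 3 * (z 0 * (z 1)⁻¹)⁻¹ = z 3 := by
    have e : (z 0 * (z 1)⁻¹) * z 3 * (z 0 * (z 1)⁻¹)⁻¹
        = z 0 * ((z 1)⁻¹ * z 3 * z 1) * (z 0)⁻¹ := by group
    rw [e, zconjB (by norm_num), zconj' (by norm_num)]
  have := congrArg (fun t => t * (z 0 * (z 1)⁻¹)) h
  simpa [mul_assoc, Commute, SemiconjBy] using this

/-- The images of the generators of the finite presentation. -/
def Z : Fin 2 → ThompsonInf := ![z 0, z 1]

lemma hrelsG : ∀ r ∈ thompsonRels, FreeGroup.lift Z r = 1 := by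
  rintro r (rfl | rfl)
  · simp only [map_commutatorElement, map_mul, map_inv, FreeGroup.lift_apply_of,
      ThompsonAux.a, ThompsonAux.b, Z]
    simp only [Matrix.cons_val_zero, Matrix.cons_val_one, Matrix.head_cons]
    rw [commutatorElement_eq_one_iff_commute]
    have e2 : (z 0)⁻¹ * z 1 * z 0 = z 2 := zconj le_rfl
    rw [e2]
    exact comm2
  · simp only [map_commutatorElement, map_mul, map_inv, map_pow, FreeGroup.lift_apply_of,
      ThompsonAux.a, ThompsonAux.b, Z]
    simp only [Matrix.cons_val_zero, Matrix.cons_val_one, Matrix.head_cons]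
    rw [commutatorElement_eq_one_iff_commute]
    have e3 : (z 0)⁻¹ ^ 2 * z 1 * z 0 ^ 2 = z 3 := by
      have e : (z 0)⁻¹ ^ 2 * z 1 * z 0 ^ 2
          = (z 0)⁻¹ * ((z 0)⁻¹ * z 1 * z 0) * z 0 := by
        rw [pow_two, pow_two]; group
      rw [e, zconj le_rfl, zconj (by norm_num)]
    rw [e3]
    exact comm3

/-- The homomorphism from `ThompsonF` to the infinite presentation. -/
def ghom : ThompsonF →* ThompsonInf := PresentedGroup.toGroup hrelsG

lemma ghom_of (i : Fin 2) : ghom (ThompsonF.x i) = Z i := PresentedGroup.toGroup.of hrelsG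

lemma zform : ∀ n : ℕ, 1 ≤ n → z n = z 0 ^ (1 - (n : ℤ)) * z 1 * z 0 ^ ((n : ℤ) - 1) := by
  intro n hn
  induction n, hn using Nat.le_induction with
  | base => norm_num
  | succ n hn ih =>
    rw [← zconj hn, ih]
    push_cast
    group

lemma ghom_X (n : ℕ) : ghom (X n) = z n := by
  have hA : ghom A = z 0 := ghom_of 0
  have hB : ghom B = z 1 := ghom_of 1
  match n with
  | 0 => exact hA
  | (k + 1) =>
    show ghom (y A B (k + 1)) = z (k + 1)
    unfold y
    rw [map_mul, map_mul, map_zpow, map_zpow, hA, hB, zform (k + 1) (by omega)]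

/-! #### Assembling the isomorphism -/

lemma gf : ghom.comp fhom = MonoidHom.id ThompsonInf := by
  apply PresentedGroup.ext (rels := thompsonInfRels)
  intro n
  show ghom (fhom (ThompsonInf.x n)) = ThompsonInf.x n
  rw [fhom_of, ghom_X]

lemma fg : fhom.comp ghom = MonoidHom.id ThompsonF := by
  apply PresentedGroup.ext (rels := thompsonRels)
  intro i
  show fhom (ghom (ThompsonF.x i)) = ThompsonF.x i
  rw [ghom_of]
  fin_cases i
  · exact fhom_of 0
  · show fhom (z 1) = B
    rw [fhom_of 1]
    exact y1

end ThompsonProof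

/-- The infinitely presented group `⟨x₀, x₁, … | xₙxᵢ = xᵢxₙ₊₁ for 0 ≤ i < n⟩` is
isomorphic to the finitely presented Thompson's group `F`, via `x₀ ↦ x₀`, `x₁ ↦ x₁`
and `xₙ ↦ x₀^{1-n} x₁ x₀^{n-1}` for `n ≥ 2`. -/
theorem thompsonInf_iso_thompsonF :
    ∃ e : ThompsonInf ≃* ThompsonF,
      e (ThompsonInf.x 0) = ThompsonF.x 0 ∧
      e (ThompsonInf.x 1) = ThompsonF.x 1 ∧
      ∀ n : ℕ, 2 ≤ n →
        e (ThompsonInf.x n) =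
          ThompsonF.x 0 ^ (1 - (n : ℤ)) * ThompsonF.x 1 * ThompsonF.x 0 ^ ((n : ℤ) - 1) := by
  open ThompsonProof in
  refine ⟨MonoidHom.toMulEquiv fhom ghom gf fg, ?_, ?_, ?_⟩
  · exact fhom_of 0
  · show fhom (ThompsonInf.x 1) = ThompsonF.x 1
    rw [fhom_of 1]; exact y1
  · intro n hn
    obtain ⟨k, rfl⟩ : ∃ k, n = k + 1 := ⟨n - 1, by omega⟩
    show fhom (ThompsonInf.x (k + 1)) = _
    rw [fhom_of (k + 1)]
    rfl
end
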